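/- If an m-edge-coloring of the countable complete graph satisfies the extension property, then every color-preserving isomorphism between finite induced subgraphs extends to a color-preserving automorphism of the whole graph (homogeneity). -/

import Mathlib

section Aux

variable {m : ℕ} {V : Type*}

/-- A finite colour-preserving partial isomorphism. -/
structure PartIso (c : V → V → Fin m) where
  D : Finset V
  R : Finset V
  f : V → V
  bij : Set.BijOn f (D : Set V) (R : Set V)
  pres : ∀ u ∈ D, ∀ v ∈ D, u ≠ v → c (f u) (f v) = c u v

variable {c : V → V → Fin m}

lemma PartIso.extend_dom (hcs : ∀ u v : V, c u v = c v u)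
    (hc : ∀ U : Fin m → Finset V, (∀ i j : Fin m, i ≠ j → Disjoint (U i) (U j)) →
      ∃ v : V, (∀ i, v ∉ U i) ∧ ∀ i : Fin m, ∀ u ∈ U i, c v u = i)
    (P : PartIso c) (v : V) :
    ∃ Q : PartIso c, P.D ⊆ Q.D ∧ P.R ⊆ Q.R ∧ v ∈ Q.D ∧ ∀ u ∈ P.D, Q.f u = P.f u := by
  classical
  by_cases hv : v ∈ P.D
  · exact ⟨P, subset_rfl, subset_rfl, hv, fun _ _ => rfl⟩
  obtain ⟨w, hw1, hw2⟩ := hc (fun i => (P.D.filter (fun a => c v a = i)).image P.f) (by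
    intro i j hij
    rw [Finset.disjoint_left]
    rintro x hx hx'
    simp only [Finset.mem_image, Finset.mem_filter] at hx hx'
    obtain ⟨a, ⟨ha, hai⟩, hfa⟩ := hx
    obtain ⟨b, ⟨hb, hbj⟩, hfb⟩ := hx'
    have hab : a = b := P.bij.injOn (Finset.mem_coe.mpr ha) (Finset.mem_coe.mpr hb)
      (hfa.trans hfb.symm)
    exact hij (hai ▸ hab ▸ hbj))
  have key : ∀ a ∈ P.D, c w (P.f a) = c v a := by
    intro a ha
    exact hw2 (c v a) (P.f a)
      (Finset.mem_image.mpr ⟨a, Finset.mem_filter.mpr ⟨ha, rfl⟩, rfl⟩)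
  have hwR : w ∉ P.R := by
    intro hw
    obtain ⟨a, ha, hfa⟩ := P.bij.surjOn (Finset.mem_coe.mpr hw)
    exact hw1 (c v a)
      (Finset.mem_image.mpr ⟨a, Finset.mem_filter.mpr ⟨Finset.mem_coe.mp ha, rfl⟩, hfa⟩)
  refine ⟨⟨insert v P.D, insert w P.R, Function.update P.f v w, ?_, ?_⟩,
    Finset.subset_insert _ _, Finset.subset_insert _ _, Finset.mem_insert_self _ _,
    fun u hu => Function.update_of_ne (show u ≠ v by rintro rfl; exact hv hu) w P.f⟩
  · refine ⟨?_, ?_, ?_⟩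
    · intro u hu
      rcases Finset.mem_insert.mp (Finset.mem_coe.mp hu) with rfl | hu'
      · simp [Function.update_self]
      · rw [Function.update_of_ne (ne_of_mem_of_not_mem hu' hv)]
        exact Finset.mem_coe.mpr (Finset.mem_insert_of_mem
          (Finset.mem_coe.mp (P.bij.mapsTo (Finset.mem_coe.mpr hu'))))
    · intro u1 hu1 u2 hu2 h12
      rcases Finset.mem_insert.mp (Finset.mem_coe.mp hu1) with rfl | h1
      · rcases Finset.mem_insert.mp (Finset.mem_coe.mp hu2) with rfl | h2
        · rfl
        · exfalso
          rw [Function.update_self, Function.update_of_ne (ne_of_mem_of_not_mem h2 hv)] at h12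
          exact hwR (h12 ▸ Finset.mem_coe.mp (P.bij.mapsTo (Finset.mem_coe.mpr h2)))
      · rcases Finset.mem_insert.mp (Finset.mem_coe.mp hu2) with rfl | h2
        · exfalso
          rw [Function.update_self, Function.update_of_ne (ne_of_mem_of_not_mem h1 hv)] at h12
          exact hwR (h12 ▸ Finset.mem_coe.mp (P.bij.mapsTo (Finset.mem_coe.mpr h1)))
        · rw [Function.update_of_ne (ne_of_mem_of_not_mem h1 hv),
            Function.update_of_ne (ne_of_mem_of_not_mem h2 hv)] at h12
          exact P.bij.injOn (Finset.mem_coe.mpr h1) (Finset.mem_coe.mpr h2) h12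
    · intro y hy
      rcases Finset.mem_insert.mp (Finset.mem_coe.mp hy) with rfl | hy'
      · exact ⟨v, Finset.mem_coe.mpr (Finset.mem_insert_self _ _), Function.update_self _ _ _⟩
      · obtain ⟨a, ha, hfa⟩ := P.bij.surjOn (Finset.mem_coe.mpr hy')
        exact ⟨a, Finset.mem_coe.mpr (Finset.mem_insert_of_mem (Finset.mem_coe.mp ha)),
          by rw [Function.update_of_ne (ne_of_mem_of_not_mem (Finset.mem_coe.mp ha) hv)]; exact hfa⟩
  · intro u1 hu1 u2 hu2 h12
    rcases Finset.mem_insert.mp hu1 with rfl | h1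
    · rcases Finset.mem_insert.mp hu2 with rfl | h2
      · exact absurd rfl h12
      · rw [Function.update_self, Function.update_of_ne (ne_of_mem_of_not_mem h2 hv)]
        exact key u2 h2
    · rcases Finset.mem_insert.mp hu2 with rfl | h2
      · rw [Function.update_self, Function.update_of_ne (ne_of_mem_of_not_mem h1 hv)]
        rw [hcs, key u1 h1, hcs]
      · rw [Function.update_of_ne (ne_of_mem_of_not_mem h1 hv),
          Function.update_of_ne (ne_of_mem_of_not_mem h2 hv)]
        exact P.pres u1 h1 u2 h2 h12

lemma PartIso.symm_exists [Nonempty V] (P : PartIso c) :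
    ∃ Q : PartIso c, Q.D = P.R ∧ Q.R = P.D ∧ (∀ u ∈ P.D, Q.f (P.f u) = u) ∧
      ∀ y ∈ P.R, P.f (Q.f y) = y := by
  have hinv := P.bij.invOn_invFunOn
  have hbij : Set.BijOn (Function.invFunOn P.f P.D) (P.R : Set V) (P.D : Set V) :=
    hinv.symm.bijOn (P.bij.surjOn.mapsTo_invFunOn) P.bij.mapsTo
  refine ⟨⟨P.R, P.D, Function.invFunOn P.f P.D, hbij, ?_⟩, rfl, rfl,
    fun u hu => hinv.1 (Finset.mem_coe.mpr hu),
    fun y hy => hinv.2 (Finset.mem_coe.mpr hy)⟩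
  intro y1 hy1 y2 hy2 h12
  set a1 := Function.invFunOn P.f P.D y1 with ha1
  set a2 := Function.invFunOn P.f P.D y2 with ha2
  have ha1D : a1 ∈ P.D := Finset.mem_coe.mp (hbij.mapsTo (Finset.mem_coe.mpr hy1))
  have ha2D : a2 ∈ P.D := Finset.mem_coe.mp (hbij.mapsTo (Finset.mem_coe.mpr hy2))
  have hf1 : P.f a1 = y1 := hinv.2 (Finset.mem_coe.mpr hy1)
  have hf2 : P.f a2 = y2 := hinv.2 (Finset.mem_coe.mpr hy2)
  have hne : a1 ≠ a2 := fun h => h12 (hf1 ▸ hf2 ▸ h ▸ rfl)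
  calc c a1 a2 = c (P.f a1) (P.f a2) := (P.pres a1 ha1D a2 ha2D hne).symm
    _ = c y1 y2 := by rw [hf1, hf2]

lemma PartIso.step [Nonempty V] (hcs : ∀ u v : V, c u v = c v u)
    (hc : ∀ U : Fin m → Finset V, (∀ i j : Fin m, i ≠ j → Disjoint (U i) (U j)) →
      ∃ v : V, (∀ i, v ∉ U i) ∧ ∀ i : Fin m, ∀ u ∈ U i, c v u = i)
    (P : PartIso c) (v : V) :
    ∃ Q : PartIso c, P.D ⊆ Q.D ∧ v ∈ Q.D ∧ v ∈ Q.R ∧ ∀ u ∈ P.D, Q.f u = P.f u := by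
  obtain ⟨P1, hD1, hR1, hv1, hf1⟩ := P.extend_dom hcs hc v
  obtain ⟨S1, hsD, hsR, hsl, hsr⟩ := P1.symm_exists
  obtain ⟨S2, hD2, hR2, hv2, hf2⟩ := S1.extend_dom hcs hc v
  obtain ⟨Q, hQD, hQR, hQl, hQr⟩ := S2.symm_exists
  have hP1S2R : P1.D ⊆ S2.R := by rw [← hsR]; exact hR2
  have hPQ : P.D ⊆ Q.D := by rw [hQD]; exact hD1.trans hP1S2R
  refine ⟨Q, hPQ, by rw [hQD]; exact hP1S2R hv1, by rw [hQR]; exact hv2, ?_⟩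
  intro u hu
  have huP1 : u ∈ P1.D := hD1 hu
  have hyS1 : P1.f u ∈ S1.D := by
    rw [hsD]; exact Finset.mem_coe.mp (P1.bij.mapsTo (Finset.mem_coe.mpr huP1))
  have h1 : S2.f (P1.f u) = u := by rw [hf2 _ hyS1]; exact hsl u huP1
  have h2 : S2.f (Q.f u) = u := hQr u (hP1S2R huP1)
  have hQfu : Q.f u ∈ S2.D := by
    rw [← hQR]; exact Finset.mem_coe.mp (Q.bij.mapsTo (Finset.mem_coe.mpr (hPQ hu)))
  have heq : Q.f u = P1.f u := S2.bij.injOn (Finset.mem_coe.mpr hQfu)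
    (Finset.mem_coe.mpr (hD2 hyS1)) (h2.trans h1.symm)
  rw [heq, hf1 u hu]

end Aux

/-- Homogeneity: if an `m`-edge-colouring of the complete graph on a countably
infinite vertex set satisfies the extension property, then every colour-preserving
isomorphism between finite induced subgraphs extends to a colour-preserving
automorphism of the whole graph. -/
theorem extension_property_homogeneous
    (m : ℕ) {V : Type*} [Countable V] [Infinite V]
    (c : V → V → Fin m) (hcs : ∀ u v : V, c u v = c v u)
    (hc : ∀ U : Fin m → Finset V, (∀ i j : Fin m, i ≠ j → Disjoint (U i) (U j)) →
      ∃ v : V, (∀ i, v ∉ U i) ∧ ∀ i : Fin m, ∀ u ∈ U i, c v u = i)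
    (A B : Finset V) (φ : V → V) (hφ : Set.BijOn φ (A : Set V) (B : Set V))
    (hφc : ∀ u ∈ A, ∀ v ∈ A, u ≠ v → c (φ u) (φ v) = c u v) :
    ∃ g : Equiv.Perm V, (∀ u ∈ A, g u = φ u) ∧
      ∀ u v : V, u ≠ v → c (g u) (g v) = c u v := by
  classical
  obtain ⟨hD⟩ := nonempty_denumerable V
  let e : ℕ ≃ V := (Denumerable.eqv V).symm
  choose F hF1 hF2 hF3 hF4 using fun (P : PartIso c) (v : V) => P.step hcs hc v
  let P0 : PartIso c := ⟨A, B, φ, hφ, hφc⟩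
  let P : ℕ → PartIso c := fun n => Nat.rec P0 (fun n Pn => F Pn (e n)) n
  have hPsucc : ∀ n, P (n + 1) = F (P n) (e n) := fun n => rfl
  have hmonoD : ∀ {a b : ℕ}, a ≤ b → (P a).D ⊆ (P b).D := by
    intro a b h
    induction h with
    | refl => exact subset_rfl
    | @step b hab ih => exact ih.trans (hF1 (P b) (e b))
  have hagree : ∀ {a b : ℕ}, a ≤ b → ∀ u ∈ (P a).D, (P b).f u = (P a).f u := by
    intro a b h
    induction h with
    | refl => intro u _; rfl
    | @step b hab ih =>
      intro u hu
      exact (hF4 (P b) (e b) u (hmonoD hab hu)).trans (ih u hu)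
  set g0 : V → V := fun v => (P (e.symm v + 1)).f v with hg0
  have hmemD : ∀ v : V, v ∈ (P (e.symm v + 1)).D := by
    intro v
    rw [hPsucc, e.apply_symm_apply]
    exact hF2 _ _
  have hmemR : ∀ v : V, v ∈ (P (e.symm v + 1)).R := by
    intro v
    rw [hPsucc, e.apply_symm_apply]
    exact hF3 _ _
  have hg_eq : ∀ (v : V) (n : ℕ), e.symm v + 1 ≤ n → (P n).f v = g0 v :=
    fun v n h => hagree h v (hmemD v)
  have hinj : Function.Injective g0 := by
    intro u v huv
    set N := max (e.symm u + 1) (e.symm v + 1) with hN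
    have hu : u ∈ (P N).D := hmonoD (le_max_left _ _) (hmemD u)
    have hv : v ∈ (P N).D := hmonoD (le_max_right _ _) (hmemD v)
    have : (P N).f u = (P N).f v := by
      rw [hg_eq u N (le_max_left _ _), hg_eq v N (le_max_right _ _), huv]
    exact (P N).bij.injOn (Finset.mem_coe.mpr hu) (Finset.mem_coe.mpr hv) this
  have hsurj : Function.Surjective g0 := by
    intro w
    obtain ⟨u, hu, hfu⟩ := (P (e.symm w + 1)).bij.surjOn (Finset.mem_coe.mpr (hmemR w))
    refine ⟨u, ?_⟩
    have h1 : (P (max (e.symm w + 1) (e.symm u + 1))).f u = g0 u :=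
      hg_eq u _ (le_max_right _ _)
    have h2 : (P (max (e.symm w + 1) (e.symm u + 1))).f u = (P (e.symm w + 1)).f u :=
      hagree (le_max_left _ _) u (Finset.mem_coe.mp hu)
    rw [← h1, h2, hfu]
  refine ⟨Equiv.ofBijective g0 ⟨hinj, hsurj⟩, ?_, ?_⟩
  · intro u hu
    have : (P (e.symm u + 1)).f u = (P 0).f u := hagree (a := 0) (b := e.symm u + 1) (Nat.zero_le _) u hu
    exact this
  · intro u v huv
    set N := max (e.symm u + 1) (e.symm v + 1) with hN
    have hu : u ∈ (P N).D := hmonoD (le_max_left _ _) (hmemD u)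
    have hv : v ∈ (P N).D := hmonoD (le_max_right _ _) (hmemD v)
    have h1 : (P N).f u = g0 u := hg_eq u N (le_max_left _ _)
    have h2 : (P N).f v = g0 v := hg_eq v N (le_max_right _ _)
    have := (P N).pres u hu v hv huv
    simpa [Equiv.ofBijective, h1, h2] using this
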